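/- arXiv:1807.05654 — 2 statements merged into one kernel-verified Lean document; each statement's English description precedes it below -/
import Mathlib

section
/- If f is analytic in the unit disk with f(0) = 1 and f is subordinate to F(z) = exp(αz/(1-z)) for some α > 0, then |f''(0)/2| ≤ α(α+2)/2. -/
section
open Metric Complex intervalIntegral Set Real Nat Topology Filter

lemma interval_integral_conj {a b : ℝ} {f : ℝ → ℂ} :
    ∫ θ in a..b, (starRingEnd ℂ) (f θ) = (starRingEnd ℂ) (∫ θ in a..b, f θ) := by
  simp only [intervalIntegral, ← integral_conj, map_sub]

lemma interval_integral_re {a b : ℝ} {f : ℝ → ℂ}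
    (hf : IntervalIntegrable f MeasureTheory.volume a b) :
    ∫ θ in a..b, (f θ).re = (∫ θ in a..b, f θ).re := by
  have h1 := Complex.reCLM.integral_comp_comm hf.1
  have h2 := Complex.reCLM.integral_comp_comm hf.2
  simp only [Complex.reCLM_apply] at h1 h2
  simp only [intervalIntegral, h1, h2, Complex.sub_re]

lemma carat_aux (ψ : ℂ → ℂ) (hψ : AnalyticOnNhd ℂ ψ (ball 0 1)) (hψ0 : ψ 0 = 0)
    (hre : ∀ z ∈ ball (0:ℂ) 1, 0 ≤ 2 * (ψ z).re + 1) {n : ℕ} (hn : 1 ≤ n)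
    {r : ℝ} (hr0 : 0 < r) (hr1 : r < 1) :
    ‖iteratedDeriv n ψ 0‖ ≤ (n ! : ℝ) * r⁻¹ ^ n := by
  obtain ⟨m, rfl⟩ : ∃ m, n = m + 1 := ⟨n - 1, (Nat.succ_pred_eq_of_pos hn).symm⟩
  set n := m + 1
  have hrne : r ≠ 0 := hr0.ne'
  set u : ℝ → ℂ := circleMap 0 r with hu
  have hu_mem : ∀ θ, u θ ∈ ball (0:ℂ) 1 := by
    intro θ
    simp only [mem_ball_zero_iff, hu]
    rw [norm_circleMap_zero, abs_of_pos hr0]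
    exact hr1
  have hu_ne : ∀ θ, u θ ≠ 0 := fun θ => circleMap_ne_center hrne
  have hu_norm : ∀ θ, ‖u θ‖ = r := by
    intro θ; rw [norm_circleMap_zero, abs_of_pos hr0]
  have hucont : Continuous u := continuous_circleMap 0 r
  have hψu_cont : Continuous fun θ => ψ (u θ) :=
    (hψ.continuousOn (s := ball 0 1)).comp_continuous hucont hu_mem
  have huinv_cont : Continuous fun θ => (u θ)⁻¹ ^ n :=
    ((hucont.inv₀ hu_ne).pow n)
  -- power series
  have hsub : closedBall (0:ℂ) r ⊆ ball 0 1 := closedBall_subset_ball hr1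
  have hd : DifferentiableOn ℂ ψ (closedBall (0:ℂ) r) := (hψ.mono hsub).differentiableOn
  have hps := DifferentiableOn.hasFPowerSeriesOnBall (R := ⟨r, hr0.le⟩) (c := (0:ℂ)) hd
    (by exact_mod_cast hr0)
  -- Step B : ∫ ψ(u θ) = 0
  have hB : (∫ θ in (0:ℝ)..2*π, ψ (u θ)) = 0 := by
    have h0 := hps.factorial_smul (1:ℂ) 0
    rw [cauchyPowerSeries_apply] at h0
    simp only [factorial_zero, one_smul, pow_zero, iteratedFDeriv_zero_apply] at h0
    rw [hψ0, smul_eq_zero] at h0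
    have h1 : (∮ z in C(0, r), (z - 0)⁻¹ • ψ z) = 0 := by
      rcases h0 with h | h
      · exact absurd h (by simp [Real.pi_ne_zero, I_ne_zero])
      · exact h
    rw [circleIntegral] at h1
    simp only [deriv_circleMap, smul_eq_mul] at h1
    have h2 : ∀ θ : ℝ, circleMap 0 r θ * I * ((circleMap 0 r θ - 0)⁻¹ * ψ (circleMap 0 r θ))
        = I * ψ (u θ) := by
      intro θ
      rw [sub_zero]
      have hc : circleMap 0 r θ ≠ 0 := hu_ne θ
      field_simp [hc]
      rfl
    rw [intervalIntegral.integral_congr (fun θ _ => h2 θ), intervalIntegral.integral_const_mul]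
      at h1
    rcases mul_eq_zero.1 h1 with h | h
    · exact absurd h I_ne_zero
    · exact h
  -- Step D : ∫ u^n ψ(u) = 0 (Cauchy-Goursat)
  have hD : (∫ θ in (0:ℝ)..2*π, (u θ)^n * ψ (u θ)) = 0 := by
    have hg : (∮ z in C(0, r), z ^ m * ψ z) = 0 := by
      apply circleIntegral_eq_zero_of_differentiable_on_off_countable hr0.le countable_empty
      · exact ((continuous_pow m).continuousOn).mul hd.continuousOn
      · intro z hz
        exact (differentiableAt_pow m).mul
          ((hψ z (ball_subset_ball hr1.le hz.1)).differentiableAt)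
    rw [circleIntegral] at hg
    simp only [deriv_circleMap, smul_eq_mul] at hg
    have h2 : ∀ θ : ℝ, circleMap 0 r θ * I * (circleMap 0 r θ ^ m * ψ (circleMap 0 r θ))
        = I * ((u θ)^n * ψ (u θ)) := by
      intro θ
      show _ = I * (circleMap 0 r θ ^ (m+1) * ψ (circleMap 0 r θ))
      ring
    rw [intervalIntegral.integral_congr (fun θ _ => h2 θ),
      intervalIntegral.integral_const_mul] at hg
    rcases mul_eq_zero.1 hg with h | h
    · exact absurd h I_ne_zero
    · exact h
  -- Step C : ∫ u⁻ⁿ conj(ψ(u)) = 0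
  have hC : (∫ θ in (0:ℝ)..2*π, (u θ)⁻¹^n * (starRingEnd ℂ) (ψ (u θ))) = 0 := by
    have key : ∀ θ : ℝ, (u θ)⁻¹^n * (starRingEnd ℂ) (ψ (u θ))
        = (starRingEnd ℂ) ((((r:ℂ)^2)⁻¹)^n * ((u θ)^n * ψ (u θ))) := by
      intro θ
      have hcu : u θ * (starRingEnd ℂ) (u θ) = (r:ℂ)^2 := by
        rw [Complex.mul_conj]
        norm_cast
        rw [Complex.normSq_eq_norm_sq, hu_norm]
      have hinv : (u θ)⁻¹ = ((r:ℂ)^2)⁻¹ * (starRingEnd ℂ) (u θ) := by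
        have hr2 : ((r:ℂ)^2) ≠ 0 :=
          pow_ne_zero 2 (by exact_mod_cast hrne : (r:ℂ) ≠ 0)
        refine inv_eq_of_mul_eq_one_right ?_
        rw [show u θ * (((r:ℂ)^2)⁻¹ * (starRingEnd ℂ) (u θ))
            = (u θ * (starRingEnd ℂ) (u θ)) * ((r:ℂ)^2)⁻¹ by ring, hcu,
          mul_inv_cancel₀ hr2]
      rw [hinv]
      simp only [map_mul, map_pow, map_inv₀, Complex.conj_ofReal]
      ring
    rw [intervalIntegral.integral_congr (fun θ _ => key θ), interval_integral_conj,
      intervalIntegral.integral_const_mul, hD, mul_zero, map_zero]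
  -- Step E : ∫ u⁻ⁿ = 0
  have hE : (∫ θ in (0:ℝ)..2*π, (u θ)⁻¹^n) = 0 := by
    have key : ∀ θ : ℝ, (u θ)⁻¹ ^ n = ((r:ℂ)⁻¹)^n * Complex.exp ((-(n:ℂ)*I) * θ) := by
      intro θ
      have hu_eq : u θ = (r:ℂ) * Complex.exp (θ * I) := by
        simp [hu, circleMap]
      rw [hu_eq, mul_inv, mul_pow, ← Complex.exp_neg, ← Complex.exp_nat_mul]
      congr 2
      push_cast
      ring
    rw [intervalIntegral.integral_congr (fun θ _ => key θ),
      intervalIntegral.integral_const_mul]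
    have hc : (-(n:ℂ)*I) ≠ 0 := by
      simp [I_ne_zero, Nat.cast_ne_zero]
    rw [integral_exp_mul_complex hc]
    have h2pi : Complex.exp (-(n:ℂ)*I * ((2*π : ℝ):ℂ)) = 1 := by
      have h := Complex.exp_int_mul_two_pi_mul_I (-(n:ℤ))
      rw [← h]
      congr 1
      push_cast
      ring
    have h2pi' : Complex.exp (-((n:ℂ) * I * (2 * (π:ℂ)))) = 1 := by
      rw [← h2pi]; congr 1; push_cast; ring
    simp [h2pi']
  -- integrability
  have int1 : IntervalIntegrable (fun θ => (u θ)⁻¹^n * ψ (u θ)) MeasureTheory.volume 0 (2*π) :=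
    (huinv_cont.mul hψu_cont).intervalIntegrable _ _
  have int2 : IntervalIntegrable (fun θ => (u θ)⁻¹^n * (starRingEnd ℂ) (ψ (u θ)))
      MeasureTheory.volume 0 (2*π) :=
    (huinv_cont.mul (Complex.continuous_conj.comp hψu_cont)).intervalIntegrable _ _
  have int3 : IntervalIntegrable (fun θ => (u θ)⁻¹^n) MeasureTheory.volume 0 (2*π) :=
    huinv_cont.intervalIntegrable _ _
  have hsplit : ∀ θ : ℝ, (u θ)⁻¹^n * (ψ (u θ) + (starRingEnd ℂ) (ψ (u θ)) + 1)
      = (u θ)⁻¹^n * ψ (u θ) + ((u θ)⁻¹^n * (starRingEnd ℂ) (ψ (u θ)) + (u θ)⁻¹^n) := by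
    intro θ; ring
  have hJ : (∫ θ in (0:ℝ)..2*π, (u θ)⁻¹^n * (ψ (u θ) + (starRingEnd ℂ) (ψ (u θ)) + 1))
      = ∫ θ in (0:ℝ)..2*π, (u θ)⁻¹^n * ψ (u θ) := by
    rw [intervalIntegral.integral_congr (fun θ _ => hsplit θ),
      intervalIntegral.integral_add int1 (int2.add int3),
      intervalIntegral.integral_add int2 int3, hC, hE]
    ring
  -- norm bound on J
  have hbound : ‖∫ θ in (0:ℝ)..2*π, (u θ)⁻¹^n * ψ (u θ)‖ ≤ r⁻¹^n * (2*π) := by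
    rw [← hJ]
    refine (intervalIntegral.norm_integral_le_integral_norm Real.two_pi_pos.le).trans ?_
    have heq : ∀ θ : ℝ, ‖(u θ)⁻¹^n * (ψ (u θ) + (starRingEnd ℂ) (ψ (u θ)) + 1)‖
        = r⁻¹^n * (2 * (ψ (u θ)).re + 1) := by
      intro θ
      rw [norm_mul, norm_pow, norm_inv, hu_norm]
      congr 1
      have hcr : ψ (u θ) + (starRingEnd ℂ) (ψ (u θ)) + 1
          = ((2 * (ψ (u θ)).re + 1 : ℝ) : ℂ) := by
        rw [Complex.add_conj]
        push_cast
        ring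
      rw [hcr, Complex.norm_real]
      exact abs_of_nonneg (hre _ (hu_mem θ))
    rw [intervalIntegral.integral_congr (fun θ _ => heq θ),
      intervalIntegral.integral_const_mul]
    have hcont2 : Continuous fun θ => (ψ (u θ)).re := Complex.continuous_re.comp hψu_cont
    have hre_int : (∫ θ in (0:ℝ)..2*π, (2 * (ψ (u θ)).re + 1)) = 2*π := by
      rw [intervalIntegral.integral_add ((hcont2.intervalIntegrable _ _).const_mul 2)
        intervalIntegrable_const, intervalIntegral.integral_const_mul,
        interval_integral_re (hψu_cont.intervalIntegrable _ _), hB]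
      simp
    rw [hre_int]
  -- final combination
  have hfinal := hps.factorial_smul (1:ℂ) n
  rw [cauchyPowerSeries_apply] at hfinal
  change n ! • (2 * ↑π * I)⁻¹ • (∮ z in C(0, r), ((1:ℂ)/(z-0))^n • (z-0)⁻¹ • ψ z) = _ at hfinal
  have hS : (∮ z in C(0, r), ((1:ℂ)/(z-0))^n • (z-0)⁻¹ • ψ z)
      = I * ∫ θ in (0:ℝ)..2*π, (u θ)⁻¹^n * ψ (u θ) := by
    rw [circleIntegral]
    simp only [deriv_circleMap, smul_eq_mul]
    have h2 : ∀ θ : ℝ, circleMap 0 r θ * I * ((1/(circleMap 0 r θ - 0))^n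
        * ((circleMap 0 r θ - 0)⁻¹ * ψ (circleMap 0 r θ)))
        = I * ((u θ)⁻¹^n * ψ (u θ)) := by
      intro θ
      rw [sub_zero, one_div]
      have hc : circleMap 0 r θ ≠ 0 := hu_ne θ
      field_simp [hc]
      rfl
    rw [intervalIntegral.integral_congr (fun θ _ => h2 θ),
      intervalIntegral.integral_const_mul]
  rw [hS] at hfinal
  rw [iteratedDeriv_eq_iteratedFDeriv, ← hfinal]
  rw [nsmul_eq_mul, smul_eq_mul, norm_mul, norm_mul, norm_mul]
  have hnn : ‖((n ! : ℕ) : ℂ)‖ = (n ! : ℝ) := by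
    rw [Complex.norm_natCast]
  have hI : ‖I‖ = 1 := Complex.norm_I
  have h2pin : ‖((2:ℂ) * (π:ℂ) * I)⁻¹‖ = (2*π)⁻¹ := by
    rw [norm_inv, norm_mul, norm_mul, Complex.norm_I, Complex.norm_real]
    simp [_root_.abs_of_nonneg Real.pi_nonneg]
  rw [hnn, hI, h2pin, one_mul]
  calc (n ! : ℝ) * ((2*π)⁻¹ * ‖∫ θ in (0:ℝ)..2*π, (u θ)⁻¹^n * ψ (u θ)‖)
      ≤ (n ! : ℝ) * ((2*π)⁻¹ * (r⁻¹^n * (2*π))) := by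
        have h2p : (0:ℝ) < 2*π := Real.two_pi_pos
        gcongr
    _ = (n ! : ℝ) * r⁻¹^n := by
        field_simp

lemma carat (ψ : ℂ → ℂ) (hψ : AnalyticOnNhd ℂ ψ (ball 0 1)) (hψ0 : ψ 0 = 0)
    (hre : ∀ z ∈ ball (0:ℂ) 1, 0 ≤ 2 * (ψ z).re + 1) {n : ℕ} (hn : 1 ≤ n) :
    ‖iteratedDeriv n ψ 0‖ ≤ (n ! : ℝ) := by
  have h : ∀ r ∈ Ioo (0:ℝ) 1, ‖iteratedDeriv n ψ 0‖ ≤ (n ! : ℝ) * r⁻¹^n :=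
    fun r hr => carat_aux ψ hψ hψ0 hre hn hr.1 hr.2
  haveI : (𝓝[Ioo (0:ℝ) 1] 1).NeBot := right_nhdsWithin_Ioo_neBot one_pos
  have htend : Filter.Tendsto (fun r : ℝ => (n ! : ℝ) * r⁻¹^n) (𝓝[Ioo (0:ℝ) 1] 1)
      (𝓝 ((n ! : ℝ))) := by
    have hc : ContinuousAt (fun r : ℝ => (n ! : ℝ) * r⁻¹^n) 1 :=
      (continuousAt_const.mul (((continuousAt_id.inv₀ one_ne_zero)).pow n))
    have := hc.tendsto.mono_left (nhdsWithin_le_nhds (s := Ioo (0:ℝ) 1))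
    simpa using this
  exact ge_of_tendsto htend (Filter.eventually_of_mem self_mem_nhdsWithin h)
end

open Metric Complex Topology Filter in
/-- If f is analytic in the unit disk, f(0) = 1, and f is subordinate to
F(z) = exp(αz/(1-z)) with α > 0, then |f''(0)/2| ≤ α(α+2)/2. -/
theorem second_coeff_exp_subordination (α : ℝ) (hα : 0 < α) (f φ : ℂ → ℂ)
    (hf : AnalyticOn ℂ f (Metric.ball (0 : ℂ) 1))
    (hf0 : f 0 = 1)
    (hφ : AnalyticOn ℂ φ (Metric.ball (0 : ℂ) 1)) (hφ0 : φ 0 = 0)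
    (hφm : ∀ z ∈ Metric.ball (0 : ℂ) 1, φ z ∈ Metric.ball (0 : ℂ) 1)
    (hsub : ∀ z ∈ Metric.ball (0 : ℂ) 1,
      f z = Complex.exp ((α : ℂ) * φ z / (1 - φ z))) :
    ‖iteratedDeriv 2 f 0 / 2‖ ≤ α * (α + 2) / 2 := by
  have h01 : (0:ℂ) ∈ ball (0:ℂ) 1 := by simp
  have hφn : AnalyticOnNhd ℂ φ (ball 0 1) := (isOpen_ball.analyticOn_iff_analyticOnNhd).1 hφ
  set ψ : ℂ → ℂ := fun z => φ z / (1 - φ z) with hψdef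
  have hone : ∀ z ∈ ball (0:ℂ) 1, (1:ℂ) - φ z ≠ 0 := by
    intro z hz h
    have hm := hφm z hz
    rw [mem_ball_zero_iff] at hm
    have : φ z = 1 := by linear_combination -h
    rw [this] at hm
    simp at hm
  have hψa : AnalyticOnNhd ℂ ψ (ball 0 1) := fun z hz =>
    (hφn z hz).div (analyticAt_const.sub (hφn z hz)) (hone z hz)
  have hψ0 : ψ 0 = 0 := by simp [hψdef, hφ0]
  have hre : ∀ z ∈ ball (0:ℂ) 1, 0 ≤ 2 * (ψ z).re + 1 := by
    intro z hz
    have hm := hφm z hz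
    rw [mem_ball_zero_iff] at hm
    set w := φ z with hw
    have hns : Complex.normSq (1-w) ≠ 0 := by
      rw [ne_eq, Complex.normSq_eq_zero]
      exact hone z hz
    have hnw : Complex.normSq w < 1 := by
      rw [← Complex.sq_norm]
      nlinarith [norm_nonneg w]
    have key : 2 * ((w / (1-w)).re) + 1 = (1 - Complex.normSq w) / Complex.normSq (1-w) := by
      rw [Complex.div_re]
      field_simp
      simp only [Complex.normSq_apply, Complex.sub_re, Complex.sub_im, Complex.one_re,
        Complex.one_im]
      ring
    show 0 ≤ 2 * ((w / (1-w)).re) + 1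
    rw [key]
    apply div_nonneg _ (Complex.normSq_nonneg _)
    linarith
  have hb1 : ‖deriv ψ 0‖ ≤ 1 := by
    have h := carat ψ hψa hψ0 hre (n := 1) le_rfl
    simpa [iteratedDeriv_one] using h
  have hb2 : ‖iteratedDeriv 2 ψ 0‖ ≤ 2 := by
    have h := carat ψ hψa hψ0 hre (n := 2) one_le_two
    norm_num [Nat.factorial] at h
    exact h
  have heq : ∀ z ∈ ball (0:ℂ) 1, f z = Complex.exp ((α:ℂ) * ψ z) := by
    intro z hz
    rw [hsub z hz, hψdef]
    ring_nf
  have hball : ball (0:ℂ) 1 ∈ 𝓝 (0:ℂ) := isOpen_ball.mem_nhds h01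
  have hDψ : ∀ z ∈ ball (0:ℂ) 1, HasDerivAt (fun w => Complex.exp ((α:ℂ) * ψ w))
      (Complex.exp ((α:ℂ) * ψ z) * ((α:ℂ) * deriv ψ z)) z := by
    intro z hz
    exact (((hψa z hz).differentiableAt.hasDerivAt).const_mul ((α:ℂ))).cexp
  have hderiv_eq : deriv f =ᶠ[𝓝 (0:ℂ)]
      fun z => Complex.exp ((α:ℂ) * ψ z) * ((α:ℂ) * deriv ψ z) := by
    filter_upwards [hball] with z hz
    have hfg : f =ᶠ[𝓝 z] fun w => Complex.exp ((α:ℂ) * ψ w) :=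
      Filter.eventuallyEq_of_mem (isOpen_ball.mem_nhds hz) heq
    rw [hfg.deriv_eq, (hDψ z hz).deriv]
  have h2 : iteratedDeriv 2 f 0 = (α:ℂ)^2 * (deriv ψ 0)^2 + (α:ℂ) * iteratedDeriv 2 ψ 0 := by
    rw [iteratedDeriv_succ, iteratedDeriv_one, hderiv_eq.deriv_eq]
    have hd1 : HasDerivAt (fun z => Complex.exp ((α:ℂ) * ψ z)) ((α:ℂ) * deriv ψ 0) 0 := by
      have h := hDψ 0 h01
      simpa [hψ0] using h
    have hd2 : HasDerivAt (fun z => (α:ℂ) * deriv ψ z) ((α:ℂ) * iteratedDeriv 2 ψ 0) 0 := by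
      have ha : AnalyticAt ℂ (deriv ψ) 0 := (hψa.deriv) 0 h01
      have h := (ha.differentiableAt.hasDerivAt).const_mul ((α:ℂ))
      rw [iteratedDeriv_succ, iteratedDeriv_one]
      exact h
    rw [(hd1.fun_mul hd2).deriv]
    simp [hψ0]
    ring
  rw [h2]
  have hb1sq : ‖deriv ψ 0‖^2 ≤ 1 := by nlinarith [norm_nonneg (deriv ψ 0)]
  have hnorm : ‖(α:ℂ)^2 * (deriv ψ 0)^2 + (α:ℂ) * iteratedDeriv 2 ψ 0‖ ≤ α^2 + 2*α := by
    refine (norm_add_le _ _).trans ?_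
    rw [norm_mul, norm_mul, norm_pow, norm_pow, Complex.norm_real, Real.norm_eq_abs, _root_.abs_of_pos hα]
    calc α^2 * ‖deriv ψ 0‖^2 + α * ‖iteratedDeriv 2 ψ 0‖
        ≤ α^2 * 1 + α * 2 := by gcongr <;> positivity
      _ = α^2 + 2*α := by ring
  rw [norm_div]
  have h2n : ‖(2:ℂ)‖ = 2 := by norm_num
  rw [h2n]
  linarith
end

section
/- Let h : 𝔻 → ℂ be analytic with h(0) = 0, h'(0) = 1, h(z) ≠ 0 for z ≠ 0, and suppose h is subordinate to a·Q, where Q(z) = 16z + 128z² + 704z³ + ⋯ is the elliptic modular function (with nonnegative, nondecreasing, convex coefficient sequence) and a ∈ ℂ with a ∈ ∂h(𝔻), |a| = dist(0, ∂h(𝔻)). Then the Taylor coefficients aₙ of h satisfy |aₙ| ≤ |a|·Aₙ for all n ≥ 1, where Aₙ are the coefficients of Q. -/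
open Complex Metric Polynomial Set Finset
open scoped Real Topology NNReal ENNReal

set_option maxHeartbeats 1000000

namespace CoeffBoundAux


lemma cont_circ {f : ℂ → ℂ} (hf : ContinuousOn f (Metric.ball 0 1)) {r : ℝ}
    (hr0 : 0 ≤ r) (hr1 : r < 1) :
    Continuous fun θ : ℝ => f (circleMap 0 r θ) := by
  apply hf.comp_continuous (continuous_circleMap 0 r)
  intro θ
  have : ‖circleMap 0 r θ‖ = |r| := norm_circleMap_zero r θ
  simp only [Metric.mem_ball, Complex.dist_eq, sub_zero, this]
  rwa [_root_.abs_of_nonneg hr0]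

lemma integral_circle_eq (f : ℂ → ℂ) {r : ℝ} (hr : 0 < r) (hr1 : r < 1)
    (hf : DifferentiableOn ℂ f (Metric.ball 0 1)) :
    (∫ θ in (0:ℝ)..(2*π), f (circleMap 0 r θ)) = 2 * π * f 0 := by
  have hd : DifferentiableOn ℂ f (Metric.closedBall 0 r) :=
    hf.mono (closedBall_subset_ball hr1)
  have H := hd.circleIntegral_sub_inv_smul (mem_ball_self hr)
  rw [circleIntegral] at H
  have key : ∀ θ : ℝ, deriv (circleMap 0 r) θ • ((circleMap 0 r θ - 0)⁻¹ • f (circleMap 0 r θ))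
      = I * f (circleMap 0 r θ) := by
    intro θ
    have hne : circleMap 0 r θ ≠ 0 := circleMap_ne_center hr.ne'
    rw [deriv_circleMap]
    simp only [smul_eq_mul, sub_zero]
    field_simp
  simp only [key] at H
  rw [intervalIntegral.integral_const_mul] at H
  have hI : (I:ℂ) ≠ 0 := I_ne_zero
  have : I * ∫ θ in (0:ℝ)..(2*π), f (circleMap 0 r θ) = I * (2 * π * f 0) := by
    rw [H]; simp [smul_eq_mul]; ring
  exact mul_left_cancel₀ hI this

lemma mean_sq_le (φ : ℂ → ℂ) (hφd : DifferentiableOn ℂ φ (Metric.ball 0 1))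
    (hφm : ∀ z ∈ Metric.ball (0:ℂ) 1, φ z ∈ Metric.ball (0:ℂ) 1) (hφ0 : φ 0 = 0)
    {r : ℝ} (hr : 0 < r) (hr1 : r < 1) (m : ℕ) :
    (∫ θ in (0:ℝ)..(2*π), ‖∑ j ∈ Finset.range m, (φ (circleMap 0 r θ))^j‖^2) ≤ 2*π*m := by
  induction m with
  | zero => simp
  | succ m ih =>
    have hSd : DifferentiableOn ℂ (fun z => ∑ j ∈ Finset.range m, (φ z)^j)
        (Metric.ball 0 1) := by
      apply DifferentiableOn.fun_sum
      intro j _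
      exact hφd.pow j
    set g : ℂ → ℂ := fun z => φ z * ∑ j ∈ Finset.range m, (φ z)^j with hg
    have hgd : DifferentiableOn ℂ g (Metric.ball 0 1) := hφd.mul hSd
    have hcont : Continuous fun θ : ℝ => g (circleMap 0 r θ) :=
      cont_circ hgd.continuousOn hr.le hr1
    have hScont : Continuous fun θ : ℝ => ∑ j ∈ Finset.range m, (φ (circleMap 0 r θ))^j :=
      cont_circ hSd.continuousOn hr.le hr1
    have hpt : ∀ θ : ℝ, ‖∑ j ∈ Finset.range (m+1), (φ (circleMap 0 r θ))^j‖^2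
        = 1 + 2 * (g (circleMap 0 r θ)).re + ‖g (circleMap 0 r θ)‖^2 := by
      intro θ
      rw [geom_sum_succ]
      have hwg : φ (circleMap 0 r θ) * ∑ i ∈ Finset.range m, φ (circleMap 0 r θ) ^ i
          = g (circleMap 0 r θ) := rfl
      rw [hwg]
      set w : ℂ := g (circleMap 0 r θ)
      have expand : Complex.normSq (w + 1) = Complex.normSq w + 2 * w.re + 1 := by
        simp [Complex.normSq_add]; ring
      have h1 : ‖w + 1‖^2 = Complex.normSq (w+1) := by
        rw [← Complex.sq_norm]
      have h2 : ‖w‖^2 = Complex.normSq w := by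
        rw [← Complex.sq_norm]
      rw [h1, h2, expand]
      ring
    rw [intervalIntegral.integral_congr (g := fun θ =>
        1 + 2 * (g (circleMap 0 r θ)).re + ‖g (circleMap 0 r θ)‖^2)
        (fun θ _ => hpt θ)]
    have i1 : IntervalIntegrable (fun θ : ℝ => 2 * (g (circleMap 0 r θ)).re)
        MeasureTheory.volume 0 (2*π) :=
      (continuous_const.mul (Complex.continuous_re.comp hcont)).intervalIntegrable _ _
    have i2 : IntervalIntegrable (fun θ : ℝ => ‖g (circleMap 0 r θ)‖^2)
        MeasureTheory.volume 0 (2*π) :=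
      ((hcont.norm).pow 2).intervalIntegrable _ _
    rw [intervalIntegral.integral_add ((intervalIntegrable_const).add i1) i2,
        intervalIntegral.integral_add (intervalIntegrable_const) i1]
    have e1 : (∫ θ in (0:ℝ)..(2*π), (1:ℝ)) = 2*π := by
      simp [Real.two_pi_pos.le]
    have e2 : (∫ θ in (0:ℝ)..(2*π), 2 * (g (circleMap 0 r θ)).re) = 0 := by
      rw [intervalIntegral.integral_const_mul]
      have : (∫ θ in (0:ℝ)..(2*π), (g (circleMap 0 r θ)).re)
          = (∫ θ in (0:ℝ)..(2*π), g (circleMap 0 r θ)).re := by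
        rw [← Complex.reCLM_apply, ← ContinuousLinearMap.intervalIntegral_comp_comm]
        · simp
        · exact hcont.intervalIntegrable _ _
      rw [this, integral_circle_eq g hr hr1 hgd]
      simp [hg, hφ0]
    have e3 : (∫ θ in (0:ℝ)..(2*π), ‖g (circleMap 0 r θ)‖^2)
        ≤ 2*π*m := by
      refine le_trans (intervalIntegral.integral_mono_on Real.two_pi_pos.le i2
        (((hScont.norm).pow 2).intervalIntegrable _ _) ?_) ih
      intro θ _
      have hball : circleMap 0 r θ ∈ Metric.ball (0:ℂ) 1 := by
        simp only [Metric.mem_ball, Complex.dist_eq, sub_zero, norm_circleMap_zero]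
        rwa [_root_.abs_of_nonneg hr.le]
      have hφ1 : ‖φ (circleMap 0 r θ)‖ ≤ 1 := by
        have := hφm _ hball
        simp only [Metric.mem_ball, Complex.dist_eq, sub_zero] at this
        exact le_of_lt this
      have : ‖g (circleMap 0 r θ)‖ ≤ ‖∑ j ∈ Finset.range m, (φ (circleMap 0 r θ))^j‖ := by
        rw [hg]
        simp only [norm_mul]
        calc ‖φ (circleMap 0 r θ)‖ * ‖∑ j ∈ Finset.range m, (φ (circleMap 0 r θ))^j‖
            ≤ 1 * ‖∑ j ∈ Finset.range m, (φ (circleMap 0 r θ))^j‖ := by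
              apply mul_le_mul_of_nonneg_right hφ1 (norm_nonneg _)
          _ = _ := one_mul _
      exact pow_le_pow_left₀ (norm_nonneg _) this 2
    rw [e1, e2]
    push_cast
    linarith



noncomputable def delta (A : ℕ → ℝ) : ℕ → ℝ
  | 0 => A 1 - A 0
  | (i+1) => A (i+2) - 2 * A (i+1) + A i

lemma delta_nonneg {A : ℕ → ℝ} (hmono : ∀ n, A n ≤ A (n + 1))
    (hconv : ∀ n, A (n + 1) - A n ≤ A (n + 2) - A (n + 1)) (i : ℕ) :
    0 ≤ delta A i := by
  cases i with
  | zero => simp only [delta]; linarith [hmono 0]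
  | succ i => simp only [delta]; linarith [hconv i]

lemma sum_delta (A : ℕ → ℝ) : ∀ k : ℕ, ∑ i ∈ Finset.range (k+1), delta A i = A (k+1) - A k := by
  intro k
  induction k with
  | zero => simp [delta]
  | succ k ih =>
    rw [Finset.sum_range_succ, ih]
    simp only [delta]
    ring

lemma sum_delta_mul {A : ℕ → ℝ} (hA0 : A 0 = 0) :
    ∀ k : ℕ, ∑ i ∈ Finset.range k, delta A i * ((k:ℝ) - i) = A k := by
  intro k
  induction k with
  | zero => simp [hA0]
  | succ k ih =>
    have step : ∀ i ∈ Finset.range (k+1),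
        delta A i * (((k:ℕ)+1:ℝ) - i) = delta A i * ((k:ℝ) - i) + delta A i := by
      intro i _; ring
    push_cast
    rw [Finset.sum_congr rfl (by intro i hi; have := step i hi; push_cast at this ⊢; exact this),
      Finset.sum_add_distrib, Finset.sum_range_succ _ k, sum_delta A k, ih]
    push_cast
    ring

noncomputable def Ppoly (m : ℕ) : Polynomial ℂ := ∑ j ∈ Finset.range m, X^j

lemma coeff_P (m k : ℕ) : (Ppoly m).coeff k = if k < m then 1 else 0 := by
  rw [Ppoly, finset_sum_coeff]
  simp only [coeff_X_pow]
  rw [Finset.sum_ite_eq (Finset.range m) k (fun _ => (1:ℂ))]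
  simp [Finset.mem_range]

lemma eval_P (m : ℕ) (w : ℂ) : (Ppoly m).eval w = ∑ j ∈ Finset.range m, w^j := by
  rw [Ppoly, eval_finset_sum]
  simp

lemma coeff_P_sq {m j : ℕ} (hj : j < m) : ((Ppoly m)^2).coeff j = ((j:ℂ)+1) := by
  rw [sq, coeff_mul]
  have : ∀ p ∈ Finset.HasAntidiagonal.antidiagonal j, (Ppoly m).coeff p.1 * (Ppoly m).coeff p.2 = 1 := by
    intro p hp
    have hsum := Finset.HasAntidiagonal.mem_antidiagonal.1 hp
    have h1 : p.1 < m := lt_of_le_of_lt (le_trans (Nat.le_add_right _ _) hsum.le) hj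
    have h2 : p.2 < m := lt_of_le_of_lt (le_trans (Nat.le_add_left _ _) hsum.le) hj
    rw [coeff_P, coeff_P, if_pos h1, if_pos h2, one_mul]
  rw [Finset.sum_congr rfl this, Finset.sum_const, Finset.Nat.card_antidiagonal]
  simp

noncomputable def Lam (A : ℕ → ℝ) (n : ℕ) : Polynomial ℂ :=
  ∑ i ∈ Finset.range n, C ((delta A i : ℝ) : ℂ) * (X^(i+1) * (Ppoly (n-i))^2)

lemma coeff_Lam {A : ℕ → ℝ} (hA0 : A 0 = 0) {n k : ℕ} (hk : k ≤ n) :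
    (Lam A n).coeff k = ((A k : ℝ) : ℂ) := by
  rw [Lam, finset_sum_coeff]
  simp only [coeff_C_mul]
  have term : ∀ i ∈ Finset.range n,
      ((delta A i : ℝ) : ℂ) * ((X^(i+1) * (Ppoly (n-i))^2).coeff k)
      = if i < k then ((delta A i : ℝ) : ℂ) * ((k:ℂ) - i) else 0 := by
    intro i hi
    rw [coeff_X_pow_mul']
    by_cases hik : i + 1 ≤ k
    · rw [if_pos hik, if_pos (by omega : i < k)]
      have hlt : k - (i+1) < n - i := by omega
      rw [coeff_P_sq hlt]
      congr 1
      have : ((k - (i+1) : ℕ) : ℂ) = (k : ℂ) - (i : ℂ) - 1 := by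
        have := Nat.cast_sub (R := ℂ) hik
        push_cast at this ⊢
        rw [this]; ring
      rw [this]; ring
    · rw [if_neg hik, if_neg (by omega : ¬ i < k), mul_zero]
  rw [Finset.sum_congr rfl term]
  have hsub : Finset.range k ⊆ Finset.range n := Finset.range_subset_range.2 hk
  rw [← Finset.sum_subset hsub (by intro i _ hik; rw [if_neg (by simpa using hik)])]
  have : ∀ i ∈ Finset.range k, (if i < k then ((delta A i : ℝ) : ℂ) * ((k:ℂ) - i) else 0)
      = ((delta A i : ℝ) : ℂ) * ((k:ℂ) - i) := by
    intro i hi; rw [if_pos (Finset.mem_range.1 hi)]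
  rw [Finset.sum_congr rfl this]
  have := congrArg (Complex.ofReal) (sum_delta_mul hA0 k)
  push_cast at this ⊢
  convert this using 1

lemma hasSum_poly (p : Polynomial ℂ) (w : ℂ) :
    HasSum (fun k => p.coeff k * w^k) (p.eval w) := by
  have h0 : ∀ k ∉ Finset.range (p.natDegree + 1), p.coeff k * w^k = 0 := by
    intro k hk
    rw [Polynomial.coeff_eq_zero_of_natDegree_lt (by simpa using Finset.mem_range.not.1 hk ), zero_mul]
  have : HasSum _ _ := hasSum_sum_of_ne_finset_zero h0
  rwa [← Polynomial.eval_eq_sum_range] at this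

lemma eval_Lam (A : ℕ → ℝ) (n : ℕ) (w : ℂ) :
    (Lam A n).eval w = ∑ i ∈ Finset.range n,
      ((delta A i : ℝ) : ℂ) * (w^(i+1) * (∑ j ∈ Finset.range (n-i), w^j)^2) := by
  rw [Lam, eval_finset_sum]
  refine Finset.sum_congr rfl fun i _ => ?_
  simp [eval_P]



noncomputable def cCoeff (f : ℂ → ℂ) (r : ℝ) (n : ℕ) : ℂ :=
  (cauchyPowerSeries f 0 r).coeff n

lemma hasFPowerSeriesOnBall_cauchy {f : ℂ → ℂ} (hd : DifferentiableOn ℂ f (Metric.ball 0 1))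
    {r : ℝ} (hr : 0 < r) (hr1 : r < 1) :
    HasFPowerSeriesOnBall f (cauchyPowerSeries f 0 r) 0 (ENNReal.ofReal r) := by
  lift r to ℝ≥0 using hr.le
  have hr' : (0:ℝ≥0) < r := by exact_mod_cast hr
  have hball : Metric.closedBall (0:ℂ) (r:ℝ) ⊆ Metric.ball 0 1 :=
    closedBall_subset_ball hr1
  have H := (hd.mono hball).hasFPowerSeriesOnBall hr'
  simpa [ENNReal.ofReal_coe_nnreal] using H

lemma cCoeff_eq_of_hasFPowerSeriesAt {f : ℂ → ℂ} {p : FormalMultilinearSeries ℂ ℂ ℂ}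
    (hf : HasFPowerSeriesAt f p 0) (hd : DifferentiableOn ℂ f (Metric.ball 0 1))
    {r : ℝ} (hr : 0 < r) (hr1 : r < 1) (n : ℕ) : p.coeff n = cCoeff f r n := by
  have H := (hasFPowerSeriesOnBall_cauchy hd hr hr1).hasFPowerSeriesAt
  rw [hf.eq_formalMultilinearSeries H]
  rfl

lemma cCoeff_add {f g : ℂ → ℂ} (hf : DifferentiableOn ℂ f (Metric.ball 0 1))
    (hg : DifferentiableOn ℂ g (Metric.ball 0 1)) {r : ℝ} (hr : 0 < r) (hr1 : r < 1) (n : ℕ) :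
    cCoeff (fun z => f z + g z) r n = cCoeff f r n + cCoeff g r n := by
  have heq : (fun z => f z + g z) = f + g := rfl
  rw [heq]
  have Hf := hasFPowerSeriesOnBall_cauchy hf hr hr1
  have Hg := hasFPowerSeriesOnBall_cauchy hg hr hr1
  have Hfg := Hf.add Hg
  have hd : DifferentiableOn ℂ (f + g) (Metric.ball 0 1) := hf.add hg
  have := (cCoeff_eq_of_hasFPowerSeriesAt Hfg.hasFPowerSeriesAt hd hr hr1 n).symm
  rw [this]
  rfl

lemma cCoeff_norm_le (f : ℂ → ℂ) {r : ℝ} (hr : 0 < r) (n : ℕ) :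
    ‖cCoeff f r n‖ ≤
      ((2*π)⁻¹ * ∫ θ in (0:ℝ)..(2*π), ‖f (circleMap 0 r θ)‖) * (r⁻¹)^n := by
  have h1 : ‖cCoeff f r n‖ ≤ ‖cauchyPowerSeries f 0 r n‖ := by
    rw [cCoeff, ← FormalMultilinearSeries.norm_apply_eq_norm_coef]
  refine h1.trans ?_
  have := norm_cauchyPowerSeries_le f 0 r n
  rwa [_root_.abs_of_nonneg hr.le] at this

lemma remainder_bound {Q : ℂ → ℂ} {pQ : FormalMultilinearSeries ℂ ℂ ℂ}
    (hQ : HasFPowerSeriesOnBall Q pQ 0 1) (L : Polynomial ℂ) {n : ℕ}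
    (hcoeff : ∀ k ≤ n, L.coeff k = pQ.coeff k) :
    ∃ C : ℝ, 0 ≤ C ∧ ∀ w : ℂ, ‖w‖ ≤ 2⁻¹ → ‖Q w - L.eval w‖ ≤ C * ‖w‖^(n+1) := by
  classical
  set c : ℕ → ℂ := fun k => pQ.coeff k - L.coeff k with hc
  have hc0 : ∀ k < n+1, c k = 0 := by
    intro k hk
    simp [hc, hcoeff k (by omega)]
  have hrad : ((2⁻¹ : ℝ≥0) : ℝ≥0∞) < pQ.radius := by
    refine lt_of_lt_of_le ?_ hQ.r_le
    norm_num
  have hsQ : Summable (fun k => ‖pQ.coeff k‖ * (2⁻¹:ℝ)^k) := by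
    refine (pQ.summable_norm_mul_pow hrad).congr ?_
    intro k
    rw [FormalMultilinearSeries.norm_apply_eq_norm_coef]
    norm_num
  have hsL : Summable (fun k => ‖L.coeff k‖ * (2⁻¹:ℝ)^k) := by
    apply summable_of_ne_finset_zero (s := Finset.range (L.natDegree + 1))
    intro k hk
    rw [Polynomial.coeff_eq_zero_of_natDegree_lt (by simpa using Finset.mem_range.not.1 hk)]
    simp
  have hs : Summable (fun k => ‖c k‖ * (2⁻¹:ℝ)^k) := by
    refine Summable.of_nonneg_of_le (fun k => by positivity) (fun k => ?_) (hsQ.add hsL)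
    have : ‖c k‖ ≤ ‖pQ.coeff k‖ + ‖L.coeff k‖ := norm_sub_le _ _
    have h2 : (0:ℝ) ≤ (2⁻¹:ℝ)^k := by positivity
    calc ‖c k‖ * (2⁻¹:ℝ)^k ≤ (‖pQ.coeff k‖ + ‖L.coeff k‖) * (2⁻¹:ℝ)^k :=
          mul_le_mul_of_nonneg_right this h2
      _ = ‖pQ.coeff k‖ * (2⁻¹:ℝ)^k + ‖L.coeff k‖ * (2⁻¹:ℝ)^k := by ring
  have hinj : Function.Injective (fun k : ℕ => k + (n+1)) := add_left_injective (n+1)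
  have hsC : Summable (fun k => ‖c (k+(n+1))‖ * (2⁻¹:ℝ)^k) := by
    have h1 : Summable ((fun k => ‖c k‖ * (2⁻¹:ℝ)^k) ∘ (fun k : ℕ => k + (n+1))) :=
      hs.comp_injective hinj
    refine (h1.mul_left ((2:ℝ)^(n+1))).congr ?_
    intro k
    simp only [Function.comp_apply]
    rw [pow_add]
    simp only [inv_pow]
    field_simp
    ring
  set C : ℝ := ∑' k, ‖c (k+(n+1))‖ * (2⁻¹:ℝ)^k with hCdef
  refine ⟨C, tsum_nonneg (fun k => by positivity), ?_⟩
  intro w hw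
  have hw1 : w ∈ Metric.eball (0:ℂ) 1 := by
    rw [mem_eball_zero_iff]
    have : ‖w‖₊ < 1 := by
      have : ‖w‖ < 1 := lt_of_le_of_lt hw (by norm_num)
      exact_mod_cast this
    rw [enorm_eq_nnnorm]
    exact_mod_cast this
  have h1 : HasSum (fun k => pQ.coeff k * w^k) (Q w) := by
    have := hQ.hasSum hw1
    simp only [FormalMultilinearSeries.apply_eq_pow_smul_coeff, smul_eq_mul, zero_add] at this
    exact this.congr_fun (fun k => by ring)
  have h2 : HasSum (fun k => L.coeff k * w^k) (L.eval w) := hasSum_poly L w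
  have h3 : HasSum (fun k => c k * w^k) (Q w - L.eval w) := by
    refine (h1.sub h2).congr_fun (fun k => ?_)
    simp only [hc]
    ring
  have h4 : HasSum (fun k => c (k+(n+1)) * w^(k+(n+1))) (Q w - L.eval w) := by
    refine (hinj.hasSum_iff ?_).2 h3
    intro x hx
    have : x < n + 1 := by
      by_contra hxn
      exact hx ⟨x - (n+1), by simp; omega⟩
    rw [hc0 x this, zero_mul]
  have hb : ∀ k, ‖c (k+(n+1)) * w^(k+(n+1))‖ ≤ ‖c (k+(n+1))‖ * (2⁻¹:ℝ)^k * ‖w‖^(n+1) := by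
    intro k
    rw [norm_mul, norm_pow, pow_add]
    have hwk : ‖w‖^k ≤ (2⁻¹:ℝ)^k := pow_le_pow_left₀ (norm_nonneg w) hw k
    calc ‖c (k+(n+1))‖ * (‖w‖^k * ‖w‖^(n+1))
        ≤ ‖c (k+(n+1))‖ * ((2⁻¹:ℝ)^k * ‖w‖^(n+1)) := by
          refine mul_le_mul_of_nonneg_left ?_ (norm_nonneg _)
          exact mul_le_mul_of_nonneg_right hwk (by positivity)
      _ = ‖c (k+(n+1))‖ * (2⁻¹:ℝ)^k * ‖w‖^(n+1) := by ring
  have hsb : Summable (fun k => ‖c (k+(n+1))‖ * (2⁻¹:ℝ)^k * ‖w‖^(n+1)) := hsC.mul_right _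
  have hsn : Summable (fun k => ‖c (k+(n+1)) * w^(k+(n+1))‖) :=
    Summable.of_nonneg_of_le (fun k => norm_nonneg _) hb hsb
  calc ‖Q w - L.eval w‖ = ‖∑' k, c (k+(n+1)) * w^(k+(n+1))‖ := by rw [h4.tsum_eq]
    _ ≤ ∑' k, ‖c (k+(n+1)) * w^(k+(n+1))‖ := norm_tsum_le_tsum_norm hsn
    _ ≤ ∑' k, ‖c (k+(n+1))‖ * (2⁻¹:ℝ)^k * ‖w‖^(n+1) := hsn.tsum_le_tsum hb hsb
    _ = C * ‖w‖^(n+1) := by rw [hCdef, ← tsum_mul_right]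


end CoeffBoundAux

/-- If h(z) = z + ⋯ is analytic in 𝔻, vanishes only at 0, and is subordinate
to a·Q where Q has nonnegative, nondecreasing, convex coefficients Aₙ with
A₁ = 16, and a ∈ ∂h(𝔻) with |a| = dist(0, ∂h(𝔻)), then the coefficients of h
satisfy |aₙ| ≤ |a|·Aₙ for n ≥ 1. -/
theorem coeff_bound_modular (h Q φ : ℂ → ℂ)
    (ph pQ : FormalMultilinearSeries ℂ ℂ ℂ) (A : ℕ → ℝ) (a : ℂ)
    (hh : HasFPowerSeriesOnBall h ph 0 1)
    (h0 : h 0 = 0) (h1 : deriv h 0 = 1)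
    (hnz : ∀ z ∈ Metric.ball (0 : ℂ) 1, z ≠ 0 → h z ≠ 0)
    (hQ : HasFPowerSeriesOnBall Q pQ 0 1)
    (hA : ∀ n, pQ.coeff n = (A n : ℂ))
    (hA0 : A 0 = 0) (hA1 : A 1 = 16)
    (hnn : ∀ n, 0 ≤ A n)
    (hmono : ∀ n, A n ≤ A (n + 1))
    (hconv : ∀ n, A (n + 1) - A n ≤ A (n + 2) - A (n + 1))
    (hφ : AnalyticOn ℂ φ (Metric.ball (0 : ℂ) 1)) (hφ0 : φ 0 = 0)
    (hφm : ∀ z ∈ Metric.ball (0 : ℂ) 1, φ z ∈ Metric.ball (0 : ℂ) 1)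
    (hsub : ∀ z ∈ Metric.ball (0 : ℂ) 1, h z = a * Q (φ z))
    (haB : a ∈ frontier (h '' Metric.ball (0 : ℂ) 1))
    (had : ‖a‖ = Metric.infDist 0 (frontier (h '' Metric.ball (0 : ℂ) 1))) :
    ∀ n : ℕ, 1 ≤ n → ‖ph.coeff n‖ ≤ ‖a‖ * A n := by
  intro n _hn
  classical
  have hball_eq : Metric.eball (0:ℂ) 1 = Metric.ball (0:ℂ) 1 := by
    rw [← Metric.emetric_ball, ENNReal.ofReal_one]
  have hQd : DifferentiableOn ℂ Q (Metric.ball 0 1) := by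
    have := hQ.differentiableOn
    rwa [hball_eq] at this
  have hφd : DifferentiableOn ℂ φ (Metric.ball 0 1) := hφ.differentiableOn
  set δ : ℕ → ℝ := CoeffBoundAux.delta A with hδdef
  have hδ0 : ∀ i, 0 ≤ δ i := fun i => CoeffBoundAux.delta_nonneg hmono hconv i
  set L : Polynomial ℂ := CoeffBoundAux.Lam A n with hLdef
  have hLd : DifferentiableOn ℂ (fun w : ℂ => L.eval w) (Metric.ball 0 1) :=
    (Polynomial.differentiable L).differentiableOn
  set D : ℂ → ℂ := fun w => Q w - L.eval w with hDdef
  have hDd : DifferentiableOn ℂ D (Metric.ball 0 1) := hQd.sub hLd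
  have hφmap : Set.MapsTo φ (Metric.ball 0 1) (Metric.ball 0 1) := fun z hz => hφm z hz
  set G : ℂ → ℂ := fun z => a * L.eval (φ z) with hGdef
  set Ψ : ℂ → ℂ := fun z => a * D (φ z) with hΨdef
  have hGd : DifferentiableOn ℂ G (Metric.ball 0 1) := by
    exact (hLd.comp hφd hφmap).const_mul a
  have hΨd : DifferentiableOn ℂ Ψ (Metric.ball 0 1) := by
    exact (hDd.comp hφd hφmap).const_mul a
  have hFd : DifferentiableOn ℂ (fun z => a * Q (φ z)) (Metric.ball 0 1) := by
    exact (hQd.comp hφd hφmap).const_mul a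
  have hph : ∀ r : ℝ, 0 < r → r < 1 →
      ph.coeff n = CoeffBoundAux.cCoeff (fun z => a * Q (φ z)) r n := by
    intro r hr hr1
    have hev : h =ᶠ[𝓝 (0:ℂ)] (fun z => a * Q (φ z)) := by
      filter_upwards [isOpen_ball.mem_nhds (mem_ball_self one_pos)] with z hz
      exact hsub z hz
    exact CoeffBoundAux.cCoeff_eq_of_hasFPowerSeriesAt
      (hh.hasFPowerSeriesAt.congr hev) hFd hr hr1 n
  have hsplit : ∀ r : ℝ, 0 < r → r < 1 →
      CoeffBoundAux.cCoeff (fun z => a * Q (φ z)) r n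
        = CoeffBoundAux.cCoeff G r n + CoeffBoundAux.cCoeff Ψ r n := by
    intro r hr hr1
    rw [← CoeffBoundAux.cCoeff_add hGd hΨd hr hr1]
    congr 1
    funext z
    simp only [hGdef, hΨdef, hDdef]
    ring
  -- remainder estimate
  obtain ⟨C, hC0, hCb⟩ := CoeffBoundAux.remainder_bound hQ L (n := n) (fun k hk => by
    rw [hA k, hLdef, CoeffBoundAux.coeff_Lam hA0 hk])
  have hφat : DifferentiableAt ℂ φ 0 :=
    hφd.differentiableAt (isOpen_ball.mem_nhds (mem_ball_self one_pos))
  have hbig := hφat.hasFDerivAt.isBigO_sub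
  rw [Asymptotics.isBigO_iff] at hbig
  obtain ⟨K₀, hK₀⟩ := hbig
  set K : ℝ := max K₀ 1 with hKdef
  have hK1 : (1:ℝ) ≤ K := le_max_right _ _
  have hKpos : (0:ℝ) < K := lt_of_lt_of_le one_pos hK1
  have hK' : ∀ᶠ z in 𝓝 (0:ℂ), ‖φ z‖ ≤ K * ‖z‖ := by
    filter_upwards [hK₀] with z hz
    rw [hφ0, sub_zero, sub_zero] at hz
    exact hz.trans (mul_le_mul_of_nonneg_right (le_max_left _ _) (norm_nonneg _))
  rw [Metric.eventually_nhds_iff] at hK'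
  obtain ⟨ρ, hρ0, hρ⟩ := hK'
  set E : ℂ := CoeffBoundAux.cCoeff Ψ (1/2) n with hEdef
  have hEindep : ∀ r : ℝ, 0 < r → r < 1 → CoeffBoundAux.cCoeff Ψ r n = E := by
    intro r hr hr1
    exact CoeffBoundAux.cCoeff_eq_of_hasFPowerSeriesAt
      (CoeffBoundAux.hasFPowerSeriesOnBall_cauchy hΨd hr hr1).hasFPowerSeriesAt hΨd
      (by norm_num) (by norm_num) n
  have hEsmall : ∀ r : ℝ, 0 < r → r < 1/2 → r < ρ → K * r ≤ 2⁻¹ →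
      ‖E‖ ≤ (‖a‖ * (C * K^(n+1))) * r := by
    intro r hr hr2 hrρ hrK
    rw [← hEindep r hr (by linarith)]
    refine (CoeffBoundAux.cCoeff_norm_le Ψ hr n).trans ?_
    have hpt : ∀ θ ∈ Set.Icc (0:ℝ) (2*π),
        ‖Ψ (circleMap 0 r θ)‖ ≤ ‖a‖ * (C * (K*r)^(n+1)) := by
      intro θ _
      have hzr : ‖circleMap 0 r θ‖ = r := by
        rw [norm_circleMap_zero, _root_.abs_of_nonneg hr.le]
      have hφz : ‖φ (circleMap 0 r θ)‖ ≤ K * r := by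
        have hd : dist (circleMap 0 r θ) 0 < ρ := by
          rw [dist_zero_right, hzr]; exact hrρ
        have := hρ hd
        rwa [hzr] at this
      have hφz2 : ‖φ (circleMap 0 r θ)‖ ≤ 2⁻¹ := le_trans hφz hrK
      have hDb : ‖D (φ (circleMap 0 r θ))‖ ≤ C * ‖φ (circleMap 0 r θ)‖^(n+1) := by
        rw [hDdef]
        exact hCb _ hφz2
      have hnΨ : ‖Ψ (circleMap 0 r θ)‖ = ‖a‖ * ‖D (φ (circleMap 0 r θ))‖ := by
        rw [hΨdef]; exact norm_mul _ _
      rw [hnΨ]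
      calc ‖a‖ * ‖D (φ (circleMap 0 r θ))‖
          ≤ ‖a‖ * (C * ‖φ (circleMap 0 r θ)‖^(n+1)) :=
            mul_le_mul_of_nonneg_left hDb (norm_nonneg a)
        _ ≤ ‖a‖ * (C * (K*r)^(n+1)) := by
            refine mul_le_mul_of_nonneg_left (mul_le_mul_of_nonneg_left ?_ hC0) (norm_nonneg a)
            exact pow_le_pow_left₀ (norm_nonneg _) hφz (n+1)
    have hcont : Continuous fun θ : ℝ => ‖Ψ (circleMap 0 r θ)‖ :=
      (CoeffBoundAux.cont_circ hΨd.continuousOn hr.le (by linarith)).norm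
    have hint : (∫ θ in (0:ℝ)..(2*π), ‖Ψ (circleMap 0 r θ)‖)
        ≤ (2*π) * (‖a‖ * (C * (K*r)^(n+1))) := by
      calc (∫ θ in (0:ℝ)..(2*π), ‖Ψ (circleMap 0 r θ)‖)
          ≤ ∫ _θ in (0:ℝ)..(2*π), ‖a‖ * (C * (K*r)^(n+1)) :=
            intervalIntegral.integral_mono_on Real.two_pi_pos.le
              (hcont.intervalIntegrable _ _) intervalIntegrable_const hpt
        _ = (2*π) * (‖a‖ * (C * (K*r)^(n+1))) := by
            rw [intervalIntegral.integral_const, smul_eq_mul]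
            ring
    have hfact : ((2*π)⁻¹ * ((2*π) * (‖a‖ * (C * (K*r)^(n+1))))) * (r⁻¹)^n
        = (‖a‖ * (C * K^(n+1))) * r := by
      have h2π : (2*π) ≠ 0 := by positivity
      have hrne : r ≠ 0 := hr.ne'
      rw [mul_pow]
      field_simp
      rw [pow_succ, one_div, inv_pow, mul_comm (r^n) r, ← mul_assoc, mul_assoc _ (r^n),
        mul_inv_cancel₀ (pow_ne_zero n hrne), mul_one]
    calc ((2*π)⁻¹ * ∫ θ in (0:ℝ)..(2*π), ‖Ψ (circleMap 0 r θ)‖) * (r⁻¹)^n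
        ≤ ((2*π)⁻¹ * ((2*π) * (‖a‖ * (C * (K*r)^(n+1))))) * (r⁻¹)^n := by
          have h1 : (0:ℝ) ≤ (2*π)⁻¹ := by positivity
          have h2 : (0:ℝ) ≤ (r⁻¹)^n := by positivity
          exact mul_le_mul_of_nonneg_right (mul_le_mul_of_nonneg_left hint h1) h2
      _ = (‖a‖ * (C * K^(n+1))) * r := hfact
  have hE0 : E = 0 := by
    have hball : ∀ ε : ℝ, 0 < ε → ‖E‖ ≤ ε := by
      intro ε hε
      set M : ℝ := ‖a‖ * (C * K^(n+1)) with hM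
      have hM0 : (0:ℝ) ≤ M := by positivity
      set r : ℝ := min (min (ρ/2) (1/4)) (min (ε/(M+1)) (1/(2*K))) with hrdef
      have hr0 : 0 < r := by
        refine lt_min (lt_min (by linarith) (by norm_num)) (lt_min ?_ ?_)
        · positivity
        · positivity
      have hr2 : r < 1/2 := by
        have : r ≤ 1/4 := le_trans (min_le_left _ _) (min_le_right _ _)
        linarith
      have hrρ : r < ρ := by
        have : r ≤ ρ/2 := le_trans (min_le_left _ _) (min_le_left _ _)
        linarith
      have hrK : K * r ≤ 2⁻¹ := by
        have h1 : r ≤ 1/(2*K) := le_trans (min_le_right _ _) (min_le_right _ _)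
        have := mul_le_mul_of_nonneg_left h1 hKpos.le
        calc K * r ≤ K * (1/(2*K)) := this
          _ = 2⁻¹ := by field_simp
      have hrε : M * r ≤ ε := by
        have h1 : r ≤ ε/(M+1) := le_trans (min_le_right _ _) (min_le_left _ _)
        have h2 : M * r ≤ M * (ε/(M+1)) := mul_le_mul_of_nonneg_left h1 hM0
        have h3 : M * (ε/(M+1)) ≤ ε := by
          have hM1 : (0:ℝ) < M + 1 := by linarith
          rw [mul_comm, div_mul_eq_mul_div, div_le_iff₀ hM1]
          nlinarith
        exact h2.trans h3
      exact (hEsmall r hr0 hr2 hrρ hrK).trans hrε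
    have : ‖E‖ ≤ 0 := le_of_forall_pos_le_add (fun ε hε => by
      have := hball ε hε
      linarith)
    exact norm_le_zero_iff.1 this
  have hGbound : ∀ r : ℝ, 0 < r → r < 1 →
      ‖CoeffBoundAux.cCoeff G r n‖ ≤ (‖a‖ * A n) * (r⁻¹)^n := by
    intro r hr hr1
    refine (CoeffBoundAux.cCoeff_norm_le G hr n).trans ?_
    have hSd : ∀ i : ℕ, DifferentiableOn ℂ
        (fun z => ∑ j ∈ Finset.range (n-i), (φ z)^j) (Metric.ball 0 1) := by
      intro i
      apply DifferentiableOn.fun_sum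
      intro j _
      exact hφd.pow j
    have hScont : ∀ i : ℕ, Continuous fun θ : ℝ =>
        ∑ j ∈ Finset.range (n-i), (φ (circleMap 0 r θ))^j := fun i =>
      CoeffBoundAux.cont_circ (hSd i).continuousOn hr.le hr1
    have hpt : ∀ θ ∈ Set.Icc (0:ℝ) (2*π), ‖G (circleMap 0 r θ)‖
        ≤ ∑ i ∈ Finset.range n,
          (‖a‖ * δ i) * ‖∑ j ∈ Finset.range (n-i), (φ (circleMap 0 r θ))^j‖^2 := by
      intro θ _
      have hball : circleMap 0 r θ ∈ Metric.ball (0:ℂ) 1 := by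
        simp only [Metric.mem_ball, Complex.dist_eq, sub_zero, norm_circleMap_zero]
        rwa [_root_.abs_of_nonneg hr.le]
      have hφ1 : ‖φ (circleMap 0 r θ)‖ ≤ 1 := by
        have := hφm _ hball
        simp only [Metric.mem_ball, Complex.dist_eq, sub_zero] at this
        exact le_of_lt this
      have hGn : ‖G (circleMap 0 r θ)‖ = ‖a‖ * ‖L.eval (φ (circleMap 0 r θ))‖ := by
        rw [hGdef]; exact norm_mul _ _
      rw [hGn, hLdef, CoeffBoundAux.eval_Lam]
      refine le_trans (mul_le_mul_of_nonneg_left (norm_sum_le _ _) (norm_nonneg a)) ?_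
      rw [Finset.mul_sum]
      refine Finset.sum_le_sum (fun i _ => ?_)
      have hterm : ‖((δ i:ℝ):ℂ) * ((φ (circleMap 0 r θ))^(i+1)
          * (∑ j ∈ Finset.range (n-i), (φ (circleMap 0 r θ))^j)^2)‖
          = δ i * (‖φ (circleMap 0 r θ)‖^(i+1)
            * ‖∑ j ∈ Finset.range (n-i), (φ (circleMap 0 r θ))^j‖^2) := by
        rw [norm_mul, norm_mul, norm_pow, norm_pow, Complex.norm_real,
          Real.norm_of_nonneg (hδ0 i)]
      rw [hterm]
      calc ‖a‖ * (δ i * (‖φ (circleMap 0 r θ)‖^(i+1)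
            * ‖∑ j ∈ Finset.range (n-i), (φ (circleMap 0 r θ))^j‖^2))
          ≤ ‖a‖ * (δ i * (1 * ‖∑ j ∈ Finset.range (n-i), (φ (circleMap 0 r θ))^j‖^2)) := by
            refine mul_le_mul_of_nonneg_left (mul_le_mul_of_nonneg_left
              (mul_le_mul_of_nonneg_right (pow_le_one₀ (norm_nonneg _) hφ1) (by positivity))
              (hδ0 i)) (norm_nonneg a)
        _ = (‖a‖ * δ i) * ‖∑ j ∈ Finset.range (n-i), (φ (circleMap 0 r θ))^j‖^2 := by ring
    have hGc : Continuous fun θ : ℝ => ‖G (circleMap 0 r θ)‖ :=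
      (CoeffBoundAux.cont_circ hGd.continuousOn hr.le hr1).norm
    have hterms_int : ∀ i : ℕ, IntervalIntegrable (fun θ : ℝ =>
        (‖a‖ * δ i) * ‖∑ j ∈ Finset.range (n-i), (φ (circleMap 0 r θ))^j‖^2)
        MeasureTheory.volume 0 (2*π) := by
      intro i
      exact (continuous_const.mul ((hScont i).norm.pow 2)).intervalIntegrable _ _
    have hint : (∫ θ in (0:ℝ)..(2*π), ‖G (circleMap 0 r θ)‖) ≤ 2*π*(‖a‖ * A n) := by
      calc (∫ θ in (0:ℝ)..(2*π), ‖G (circleMap 0 r θ)‖)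
          ≤ ∫ θ in (0:ℝ)..(2*π), ∑ i ∈ Finset.range n,
              (‖a‖ * δ i) * ‖∑ j ∈ Finset.range (n-i), (φ (circleMap 0 r θ))^j‖^2 := by
            refine intervalIntegral.integral_mono_on Real.two_pi_pos.le
              (hGc.intervalIntegrable _ _) ?_ hpt
            apply Continuous.intervalIntegrable
            exact continuous_finset_sum _
              (fun i _ => continuous_const.mul ((hScont i).norm.pow 2))
        _ = ∑ i ∈ Finset.range n, ∫ θ in (0:ℝ)..(2*π),
              (‖a‖ * δ i) * ‖∑ j ∈ Finset.range (n-i), (φ (circleMap 0 r θ))^j‖^2 :=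
            intervalIntegral.integral_finset_sum (fun i _ => hterms_int i)
        _ = ∑ i ∈ Finset.range n, (‖a‖ * δ i) * ∫ θ in (0:ℝ)..(2*π),
              ‖∑ j ∈ Finset.range (n-i), (φ (circleMap 0 r θ))^j‖^2 := by
            refine Finset.sum_congr rfl (fun i _ => ?_)
            exact intervalIntegral.integral_const_mul _ _
        _ ≤ ∑ i ∈ Finset.range n, (‖a‖ * δ i) * (2*π*((n-i:ℕ):ℝ)) := by
            refine Finset.sum_le_sum (fun i _ => ?_)
            refine mul_le_mul_of_nonneg_left ?_ (mul_nonneg (norm_nonneg a) (hδ0 i))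
            exact CoeffBoundAux.mean_sq_le φ hφd hφm hφ0 hr hr1 (n-i)
        _ = 2*π*(‖a‖ * A n) := by
            have hc : ∀ i ∈ Finset.range n,
                (‖a‖ * δ i)*(2*π*((n-i:ℕ):ℝ)) = (2*π*‖a‖) * (δ i * ((n:ℝ) - i)) := by
              intro i hi
              have hin : i ≤ n := (Finset.mem_range.1 hi).le
              have : ((n - i:ℕ):ℝ) = (n:ℝ) - i := by
                push_cast [Nat.cast_sub hin]
                ring
              rw [this]; ring
            rw [Finset.sum_congr rfl hc, ← Finset.mul_sum,
              CoeffBoundAux.sum_delta_mul hA0 n]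
            ring
    calc ((2*π)⁻¹ * ∫ θ in (0:ℝ)..(2*π), ‖G (circleMap 0 r θ)‖) * (r⁻¹)^n
        ≤ ((2*π)⁻¹ * (2*π*(‖a‖ * A n))) * (r⁻¹)^n := by
          have h1 : (0:ℝ) ≤ (2*π)⁻¹ := by positivity
          have h2 : (0:ℝ) ≤ (r⁻¹)^n := by positivity
          exact mul_le_mul_of_nonneg_right (mul_le_mul_of_nonneg_left hint h1) h2
      _ = (‖a‖ * A n) * (r⁻¹)^n := by
          have h2π : (2*π) ≠ 0 := by positivity
          field_simp
  have hfinal : ∀ r : ℝ, 0 < r → r < 1 → ‖ph.coeff n‖ ≤ (‖a‖ * A n) * (r⁻¹)^n := by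
    intro r hr hr1
    rw [hph r hr hr1, hsplit r hr hr1, hEindep r hr hr1, hE0, add_zero]
    exact hGbound r hr hr1
  have htend : Filter.Tendsto (fun r : ℝ => (‖a‖ * A n) * (r⁻¹)^n)
      (𝓝[<] (1:ℝ)) (𝓝 (‖a‖ * A n)) := by
    have hca : ContinuousAt (fun r : ℝ => (‖a‖ * A n) * (r⁻¹)^n) 1 := by
      have h1 : ContinuousAt (fun r : ℝ => r⁻¹) 1 := continuousAt_inv₀ one_ne_zero
      exact continuousAt_const.mul (h1.pow n)
    have := hca.tendsto
    simp only [inv_one, one_pow, mul_one] at this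
    exact this.mono_left nhdsWithin_le_nhds
  refine ge_of_tendsto htend ?_
  filter_upwards [Ioo_mem_nhdsLT_of_mem (Set.mem_Ioc.2 ⟨one_pos, le_refl (1:ℝ)⟩)] with r hr
  exact hfinal r hr.1 hr.2
end
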